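/- Let r ≥ 2 be an integer. Then the product over k = 1,...,r of the sums of the entries of the vectors w_k satisfies ∏_{k=1}^{r} (e_r^T w_k) = (−1)^{⌊r/2⌋} · 2^{r−1}, where e_r^T w_k denotes the sum of the r entries of w_k. -/

import Mathlib

open Matrix Real BigOperators

noncomputable section

/-- `β_k = (2k - 2)π / (2r - 1)`. -/
def betaA (r k : ℕ) : ℝ := (2 * (k : ℝ) - 2) * Real.pi / (2 * (r : ℝ) - 1)

/-- The vector `w_k` whose `j`-th entry (1-based `j ≤ r - 1`) is
`(-1)^(r-j) · 2 cos((r-j) β_k)` and whose last entry is `1`; here 0-based indexing. -/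
def wvec (r k : ℕ) : Fin r → ℝ :=
  fun j => if (j : ℕ) = r - 1 then 1
    else (-1 : ℝ) ^ (r - 1 - (j : ℕ)) * (2 * Real.cos (((r - 1 - (j : ℕ) : ℕ) : ℝ) * betaA r k))

/-- Telescoping identity. -/
lemma telescope_cos (θ : ℝ) (n : ℕ) :
    Real.cos (θ/2) * (1 + ∑ j ∈ Finset.range n,
      (-1:ℝ)^(j+1) * (2 * Real.cos (((j+1 : ℕ) : ℝ) * θ)))
      = (-1:ℝ)^n * Real.cos ((2*(n:ℝ)+1) * θ / 2) := by
  induction n with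
  | zero => norm_num
  | succ n ih =>
    rw [Finset.sum_range_succ]
    have h1 := Real.cos_add (((n:ℝ)+1)*θ) (θ/2)
    have h2 := Real.cos_sub (((n:ℝ)+1)*θ) (θ/2)
    have e1 : ((n:ℝ)+1)*θ + θ/2 = (2*((n:ℝ)+1)+1) * θ / 2 := by ring
    have e2 : ((n:ℝ)+1)*θ - θ/2 = (2*(n:ℝ)+1) * θ / 2 := by ring
    rw [e1] at h1
    rw [e2] at h2
    push_cast at ih ⊢
    linear_combination ih - (-1:ℝ)^(n+1) * h1 - (-1:ℝ)^(n+1) * h2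

/-- Sum of entries of `w_k`. -/
lemma sum_wvec_eq (r k : ℕ) (hr : 2 ≤ r) (hk1 : 1 ≤ k) (hkr : k ≤ r) :
    (∑ j, wvec r k j) = (-1:ℝ)^(r+k) / Real.cos (((k:ℝ)-1) * Real.pi / (2*(r:ℝ)-1)) := by
  obtain ⟨n, rfl⟩ : ∃ n, r = n + 1 := ⟨r - 1, by omega⟩
  obtain ⟨k', rfl⟩ : ∃ k', k = k' + 1 := ⟨k - 1, by omega⟩
  have hn : 1 ≤ n := by omega
  set θ := betaA (n+1) (k'+1) with hθ
  have hNpos : (0:ℝ) < 2*(n:ℝ)+1 := by positivity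
  have hNne : (2*(n:ℝ)+1) ≠ 0 := ne_of_gt hNpos
  have hθval : θ = (2*(k':ℝ)) * Real.pi / (2*(n:ℝ)+1) := by
    rw [hθ]; unfold betaA; push_cast; ring_nf
  have hhalf : θ/2 = (k':ℝ) * Real.pi / (2*(n:ℝ)+1) := by
    rw [hθval]; ring
  have hcospos : 0 < Real.cos (θ/2) := by
    apply Real.cos_pos_of_mem_Ioo
    constructor
    · rw [hhalf]
      have : (0:ℝ) ≤ (k':ℝ) * Real.pi / (2*(n:ℝ)+1) := by positivity
      linarith [Real.pi_pos]
    · rw [hhalf, div_lt_iff₀ hNpos]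
      have hk'n : (k':ℝ) ≤ (n:ℝ) := by exact_mod_cast (by omega : k' ≤ n)
      nlinarith [Real.pi_pos]
  have hcosne : Real.cos (θ/2) ≠ 0 := ne_of_gt hcospos
  -- compute sum
  set g : ℕ → ℝ := fun m => if m = n then (1:ℝ)
    else (-1:ℝ)^(n-m) * (2 * Real.cos (((n-m : ℕ) : ℝ) * θ)) with hg
  have hfin : ∀ j : Fin (n+1), wvec (n+1) (k'+1) j = g (j : ℕ) := by
    intro j
    unfold wvec
    rw [← hθ, hg]
    simp only [Nat.add_sub_cancel]
  set F : ℕ → ℝ := fun i => (-1:ℝ)^(i+1) * (2 * Real.cos (((i+1 : ℕ) : ℝ) * θ)) with hF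
  have hsum : (∑ j, wvec (n+1) (k'+1) j) = 1 + ∑ j ∈ Finset.range n, F j := by
    calc (∑ j, wvec (n+1) (k'+1) j) = ∑ j : Fin (n+1), g (j : ℕ) :=
          Finset.sum_congr rfl (fun j _ => hfin j)
      _ = ∑ j ∈ Finset.range (n+1), g j := Fin.sum_univ_eq_sum_range g (n+1)
      _ = (∑ j ∈ Finset.range n, g j) + g n := Finset.sum_range_succ g n
      _ = 1 + ∑ j ∈ Finset.range n, F j := by
          have h1 : g n = 1 := by rw [hg]; simp
          have h2 : ∑ j ∈ Finset.range n, g j = ∑ j ∈ Finset.range n, F (n-1-j) := by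
            refine Finset.sum_congr rfl (fun j hj => ?_)
            simp only [Finset.mem_range] at hj
            rw [hg]
            simp only
            rw [if_neg (by omega)]
            have e : n - j = (n-1-j)+1 := by omega
            rw [e, hF]
          rw [h2, Finset.sum_range_reflect, h1]
          ring
  have htel := telescope_cos θ n
  rw [← hF, ← hsum] at htel
  have hang : (2*(n:ℝ)+1) * θ / 2 = (k':ℝ) * Real.pi := by
    rw [hθval]; field_simp
  have hcosk : Real.cos ((k':ℝ) * Real.pi) = (-1:ℝ)^k' := by
    have := Real.cos_nat_mul_pi_sub 0 k'
    simpa using this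
  rw [hang, hcosk] at htel
  have hpow : (-1:ℝ)^(n+1+(k'+1)) = (-1:ℝ)^n * (-1:ℝ)^k' := by
    have h : n+1+(k'+1) = (n+k') + 2 := by omega
    rw [h, pow_add, pow_add]; ring
  have hcastden : (((k'+1:ℕ)):ℝ) - 1 = (k':ℝ) := by push_cast; ring
  have hcastN : 2*(((n+1:ℕ)):ℝ) - 1 = 2*(n:ℝ)+1 := by push_cast; ring
  rw [hcastden, hcastN, ← hhalf, eq_div_iff hcosne, hpow]
  linear_combination htel

/-- Permutation lemma for the sine product. -/
lemma sin_prod_double (n : ℕ) (hn : 1 ≤ n) :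
    ∏ j ∈ Finset.Icc 1 n, Real.sin (2*(j:ℝ) * Real.pi / (2*(n:ℝ)+1))
      = ∏ j ∈ Finset.Icc 1 n, Real.sin ((j:ℝ) * Real.pi / (2*(n:ℝ)+1)) := by
  have hNpos : (0:ℝ) < 2*(n:ℝ)+1 := by positivity
  apply Finset.prod_nbij' (i := fun a => if 2*a ≤ n then 2*a else 2*n+1-2*a)
    (j := fun b => if b % 2 = 0 then b/2 else n - (b-1)/2)
  · intro a ha
    simp only [Finset.mem_Icc] at *
    split <;> omega
  · intro b hb
    simp only [Finset.mem_Icc] at *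
    split <;> omega
  · intro a ha
    simp only [Finset.mem_Icc] at ha
    by_cases h : 2*a ≤ n
    · rw [if_pos h, if_pos (show (2*a) % 2 = 0 by omega)]
      omega
    · rw [if_neg h, if_neg (show ¬ ((2*n+1-2*a) % 2 = 0) by omega)]
      omega
  · intro b hb
    simp only [Finset.mem_Icc] at hb
    rcases Nat.even_or_odd b with ⟨c, hc⟩ | ⟨c, hc⟩
    · rw [if_pos (show b % 2 = 0 by omega)]
      rw [if_pos (show 2*(b/2) ≤ n by omega)]
      omega
    · rw [if_neg (show ¬ (b % 2 = 0) by omega)]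
      rw [if_neg (show ¬ (2*(n - (b-1)/2) ≤ n) by omega)]
      omega
  · intro a ha
    simp only [Finset.mem_Icc] at ha
    by_cases h : 2*a ≤ n
    · rw [if_pos h]; push_cast; ring_nf
    · rw [if_neg h]
      have hle : 2*a ≤ 2*n+1 := by omega
      have hc : ((2*n+1-2*a : ℕ) : ℝ) = 2*(n:ℝ)+1-2*(a:ℝ) := by
        push_cast [hle]; ring
      rw [hc]
      have e : (2*(n:ℝ)+1-2*(a:ℝ)) * Real.pi / (2*(n:ℝ)+1)
          = Real.pi - 2*(a:ℝ) * Real.pi / (2*(n:ℝ)+1) := by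
        field_simp
      rw [e, Real.sin_pi_sub]

/-- The cosine product. -/
lemma cos_prod (n : ℕ) (hn : 1 ≤ n) :
    ∏ j ∈ Finset.Icc 1 n, Real.cos ((j:ℝ) * Real.pi / (2*(n:ℝ)+1)) = (1/2:ℝ)^n := by
  have hNpos : (0:ℝ) < 2*(n:ℝ)+1 := by positivity
  set C := ∏ j ∈ Finset.Icc 1 n, Real.cos ((j:ℝ) * Real.pi / (2*(n:ℝ)+1)) with hC
  set P := ∏ j ∈ Finset.Icc 1 n, Real.sin ((j:ℝ) * Real.pi / (2*(n:ℝ)+1)) with hPdef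
  have hsinpos : ∀ j ∈ Finset.Icc 1 n, 0 < Real.sin ((j:ℝ) * Real.pi / (2*(n:ℝ)+1)) := by
    intro j hj
    simp only [Finset.mem_Icc] at hj
    apply Real.sin_pos_of_pos_of_lt_pi
    · have h1 : (1:ℝ) ≤ (j:ℝ) := by exact_mod_cast hj.1
      have := Real.pi_pos
      positivity
    · rw [div_lt_iff₀ hNpos]
      have : (j:ℝ) ≤ (n:ℝ) := by exact_mod_cast hj.2
      nlinarith [Real.pi_pos]
  have hP : 0 < P := Finset.prod_pos hsinpos
  have hPne : P ≠ 0 := ne_of_gt hP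
  have hdouble : ∀ j ∈ Finset.Icc 1 n,
      Real.sin (2*(j:ℝ) * Real.pi / (2*(n:ℝ)+1))
        = 2 * Real.sin ((j:ℝ) * Real.pi / (2*(n:ℝ)+1)) * Real.cos ((j:ℝ) * Real.pi / (2*(n:ℝ)+1)) := by
    intro j hj
    have e : 2*(j:ℝ) * Real.pi / (2*(n:ℝ)+1) = 2 * ((j:ℝ) * Real.pi / (2*(n:ℝ)+1)) := by ring
    rw [e, Real.sin_two_mul]
  have key := sin_prod_double n hn
  rw [Finset.prod_congr rfl hdouble] at key
  have hsplit : ∏ j ∈ Finset.Icc 1 n,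
      (2 * Real.sin ((j:ℝ) * Real.pi / (2*(n:ℝ)+1)) * Real.cos ((j:ℝ) * Real.pi / (2*(n:ℝ)+1)))
      = (2:ℝ)^n * P * C := by
    rw [Finset.prod_mul_distrib, Finset.prod_mul_distrib, Finset.prod_const,
      Nat.card_Icc]
    simp only [Nat.add_sub_cancel]
    rfl
  rw [hsplit] at key
  -- key : 2^n * P * C = P
  have h2ne : ((2:ℝ)^n) ≠ 0 := by positivity
  have h1 : P * ((2:ℝ)^n * C - 1) = 0 := by linear_combination key
  rcases mul_eq_zero.mp h1 with h | h
  · exact absurd h hPne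
  · have h2C : (2:ℝ)^n * C = 1 := by linarith
    rw [div_pow, one_pow, eq_div_iff h2ne]
    linear_combination h2C

lemma gauss_sum_Icc (r : ℕ) : (∑ k ∈ Finset.Icc 1 r, k) * 2 = r * (r + 1) := by
  induction r with
  | zero => simp
  | succ n ih =>
    rw [Finset.sum_Icc_succ_top (by omega), add_mul, ih]
    ring

lemma sign_lemma (r : ℕ) :
    (-1:ℝ) ^ (∑ k ∈ Finset.Icc 1 r, (r + k)) = (-1:ℝ) ^ (r / 2) := by
  have hsum : ∑ k ∈ Finset.Icc 1 r, (r + k) = r * r + ∑ k ∈ Finset.Icc 1 r, k := by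
    rw [Finset.sum_add_distrib, Finset.sum_const, Nat.card_Icc, smul_eq_mul]
    have : r + 1 - 1 = r := by omega
    rw [this, mul_comm]
  have hG := gauss_sum_Icc r
  set G := ∑ k ∈ Finset.Icc 1 r, k with hGdef
  rcases Nat.even_or_odd r with ⟨m, hm⟩ | ⟨m, hm⟩
  · have hGval : G = m * (2*m+1) := by
      refine Nat.eq_of_mul_eq_mul_right (show 0 < 2 by norm_num) ?_
      rw [hG, hm]; ring
    have hE : ∑ k ∈ Finset.Icc 1 r, (r + k) = 2 * (3*m*m) + m := by
      rw [hsum, hGval, hm]; ring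
    have hr2 : r / 2 = m := by omega
    rw [hE, hr2, pow_add, pow_mul]
    norm_num
  · have hGval : G = (2*m+1) * (m+1) := by
      refine Nat.eq_of_mul_eq_mul_right (show 0 < 2 by norm_num) ?_
      rw [hG, hm]; ring
    have hE : ∑ k ∈ Finset.Icc 1 r, (r + k) = 2 * (3*m*m+3*m+1) + m := by
      rw [hsum, hGval, hm]; ring
    have hr2 : r / 2 = m := by omega
    rw [hE, hr2, pow_add, pow_mul]
    norm_num

/-- `∏_{k=1}^{r} (e_rᵀ w_k) = (-1)^⌊r/2⌋ · 2^(r-1)`. -/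
theorem prod_sum_wvec (r : ℕ) (hr : 2 ≤ r) :
    ∏ k ∈ Finset.Icc 1 r, (∑ j, wvec r k j) = (-1 : ℝ) ^ (r / 2) * 2 ^ (r - 1) := by
  obtain ⟨n, rfl⟩ : ∃ n, r = n + 1 := ⟨r - 1, by omega⟩
  have hn : 1 ≤ n := by omega
  have hcastN : 2*(((n+1:ℕ)):ℝ) - 1 = 2*(n:ℝ)+1 := by push_cast; ring
  have hstep : ∀ k ∈ Finset.Icc 1 (n+1), (∑ j, wvec (n+1) k j)
      = (-1:ℝ)^(n+1+k) / Real.cos (((k:ℝ)-1) * Real.pi / (2*(n:ℝ)+1)) := by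
    intro k hk
    simp only [Finset.mem_Icc] at hk
    rw [sum_wvec_eq (n+1) k hr hk.1 hk.2, hcastN]
  rw [Finset.prod_congr rfl hstep, Finset.prod_div_distrib]
  have hsign : ∏ k ∈ Finset.Icc 1 (n+1), (-1:ℝ)^(n+1+k) = (-1:ℝ)^((n+1)/2) := by
    rw [Finset.prod_pow_eq_pow_sum, sign_lemma]
  rw [hsign]
  have hcosprod : ∏ k ∈ Finset.Icc 1 (n+1), Real.cos (((k:ℝ)-1) * Real.pi / (2*(n:ℝ)+1))
      = (1/2:ℝ)^n := by
    have hre : ∏ k ∈ Finset.Icc 1 (n+1), Real.cos (((k:ℝ)-1) * Real.pi / (2*(n:ℝ)+1))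
        = ∏ j ∈ Finset.Icc 0 n, Real.cos ((j:ℝ) * Real.pi / (2*(n:ℝ)+1)) := by
      apply Finset.prod_nbij' (i := fun k => k - 1) (j := fun j => j + 1)
      · intro a ha; simp only [Finset.mem_Icc] at *; omega
      · intro b hb; simp only [Finset.mem_Icc] at *; omega
      · intro a ha; simp only [Finset.mem_Icc] at ha; omega
      · intro b _; omega
      · intro a ha
        simp only [Finset.mem_Icc] at ha
        have e : ((a - 1 : ℕ) : ℝ) = (a:ℝ) - 1 := by
          have h1 : 1 ≤ a := ha.1
          push_cast [h1]; ring
        rw [e]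
    rw [hre]
    have hsplit : Finset.Icc 0 n = insert 0 (Finset.Icc 1 n) := by
      ext x; simp only [Finset.mem_Icc, Finset.mem_insert]; omega
    rw [hsplit, Finset.prod_insert (by simp)]
    simp only [Nat.cast_zero, zero_mul, zero_div, Real.cos_zero, one_mul]
    exact cos_prod n hn
  rw [hcosprod]
  have hc : (n + 1 - 1) = n := by omega
  rw [hc, one_div, inv_pow]; field_simp
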